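/- Let A and B be the elements of SL(2,ℤ) given by the matrices A = [[2,−1],[1,0]] and B = [[−1,1],[1,0]]. Then the images of A and B² in the quotient of SL(2,ℤ) by its center (the modular group PSL(2,ℤ)) generate the whole quotient group; equivalently, the subgroup of SL(2,ℤ) generated by A, B² and −I is all of SL(2,ℤ). -/

import Mathlib

open Matrix ModularGroup

/-- The matrix `A = [[2,-1],[1,0]]`. -/
def matA : Matrix (Fin 2) (Fin 2) ℤ := !![2, -1; 1, 0]

/-- The matrix `B = [[-1,1],[1,0]]` (the homography `x ↦ (1-x)/x`). -/
def matB : Matrix (Fin 2) (Fin 2) ℤ := !![-1, 1; 1, 0]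

/-- `A` as an element of `SL(2,ℤ)`. -/
def stmtA : Matrix.SpecialLinearGroup (Fin 2) ℤ :=
  ⟨matA, by norm_num [matA, Matrix.det_fin_two_of]⟩

/-- `B²` as an element of `SL(2,ℤ)`. -/
def stmtB2 : Matrix.SpecialLinearGroup (Fin 2) ℤ :=
  ⟨matB ^ 2, by
    norm_num [matB, pow_two, Matrix.mul_fin_two, Matrix.det_fin_two_of]⟩

/-- `-I = [[-1,0],[0,-1]]` as an element of `SL(2,ℤ)`. -/
def stmtNegI : Matrix.SpecialLinearGroup (Fin 2) ℤ :=
  ⟨!![-1, 0; 0, -1], by norm_num [Matrix.det_fin_two_of]⟩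

/-- The images of `A` and `B²` in the modular group `PSL(2,ℤ) = SL(2,ℤ)/{±I}`
generate it; equivalently, the subgroup of `SL(2,ℤ)` generated by `A`, `B²` and `-I` is all of
`SL(2,ℤ)`. -/
theorem stmt15 :
    Subgroup.closure ({stmtA, stmtB2, stmtNegI} :
      Set (Matrix.SpecialLinearGroup (Fin 2) ℤ)) = ⊤ := by
  set H := Subgroup.closure ({stmtA, stmtB2, stmtNegI} :
      Set (Matrix.SpecialLinearGroup (Fin 2) ℤ)) with hH
  have hA : stmtA ∈ H := Subgroup.subset_closure (by simp)
  have hB2 : stmtB2 ∈ H := Subgroup.subset_closure (by simp)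
  have hN : stmtNegI ∈ H := Subgroup.subset_closure (by simp)
  -- T ∈ H
  have hTid : T * (stmtB2 * stmtA) = stmtB2 := by
    ext i j
    simp only [Matrix.SpecialLinearGroup.coe_mul]
    fin_cases i <;> fin_cases j <;>
      simp [T, stmtA, stmtB2, matA, matB, pow_two, Matrix.mul_fin_two]
  have hT : T ∈ H := by
    rw [eq_mul_inv_of_mul_eq hTid]
    exact H.mul_mem hB2 (H.inv_mem (H.mul_mem hB2 hA))
  -- S ∈ H
  have hSid : T * (S * (T * stmtB2)) = stmtA := by
    ext i j
    simp only [Matrix.SpecialLinearGroup.coe_mul]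
    fin_cases i <;> fin_cases j <;>
      simp [T, S, stmtA, stmtB2, matA, matB, pow_two, Matrix.mul_fin_two]
  have hS : S ∈ H := by
    rw [eq_mul_inv_of_mul_eq (eq_inv_mul_of_mul_eq hSid)]
    exact H.mul_mem (H.mul_mem (H.inv_mem hT) hA) (H.inv_mem (H.mul_mem hT hB2))
  -- main induction on |c|
  have key : ∀ n : ℕ, ∀ g : Matrix.SpecialLinearGroup (Fin 2) ℤ,
      (g.1 1 0).natAbs = n → g ∈ H := by
    intro n
    induction n using Nat.strong_induction_on with
    | _ n ih =>
      intro g hg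
      rcases eq_or_ne (g.1 1 0) 0 with hc | hc
      · -- c = 0
        have hdet : g.1 0 0 * g.1 1 1 = 1 := by
          have h2 := g.2
          rw [Matrix.det_fin_two] at h2
          rw [hc, mul_zero, sub_zero] at h2
          exact h2
        rcases Int.mul_eq_one_iff_eq_one_or_neg_one.mp hdet with ⟨h1, h2⟩ | ⟨h1, h2⟩
        · have : g = T ^ (g.1 0 1) := by
            ext i j
            rw [coe_T_zpow]
            fin_cases i <;> fin_cases j <;> simp [h1, h2, hc]
          rw [this]
          exact H.zpow_mem hT _
        · have : g = stmtNegI * T ^ (-(g.1 0 1)) := by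
            ext i j
            rw [Matrix.SpecialLinearGroup.coe_mul, coe_T_zpow]
            fin_cases i <;> fin_cases j <;>
              simp [stmtNegI, h1, h2, hc, Matrix.mul_apply, Fin.sum_univ_two]
          rw [this]
          exact H.mul_mem hN (H.zpow_mem hT _)
      · -- c ≠ 0
        set a := g.1 0 0 with ha
        set c := g.1 1 0 with hcdef
        set q : ℤ := -(a / c) with hq
        set g' := S * (T ^ q * g) with hg'
        have hTq : (T ^ q * g).1 0 0 = a + q * c := by
          rw [Matrix.SpecialLinearGroup.coe_mul, coe_T_zpow, Matrix.mul_apply,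
            Fin.sum_univ_two]
          simp [ha, hcdef]
        have hentry : g'.1 1 0 = a % c := by
          rw [hg', Matrix.SpecialLinearGroup.coe_mul, Matrix.mul_apply, Fin.sum_univ_two,
            coe_S]
          simp [hTq]
          rw [Int.emod_def, hq]
          ring
        have hlt : (g'.1 1 0).natAbs < n := by
          rw [hentry, ← hg]
          rw [Int.natAbs_lt_iff_sq_lt]
          have h1 := Int.emod_nonneg a hc
          have h2 : a % c < |c| := (Int.emod_abs a c) ▸ Int.emod_lt_of_pos a (abs_pos.mpr hc)
          nlinarith [abs_nonneg c, sq_abs c]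
        have hg'mem : g' ∈ H := ih _ hlt g' rfl
        have hgeq : g = (T ^ q)⁻¹ * (S⁻¹ * g') := by rw [hg']; group
        rw [hgeq]
        exact H.mul_mem (H.inv_mem (H.zpow_mem hT q)) (H.mul_mem (H.inv_mem hS) hg'mem)
  refine eq_top_iff.mpr fun g _ => key _ g rfl
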